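/- Oscillatory projection theorem (Theorem 3.9, Hilbert-space form). Assume Hypotheses (SL) and (SLO). Then for every (k, f) ∈ ℝ^D × ℝ and every n ∈ ℤ^D with n ≠ 0, the set { v ∈ ℝ \ {0} : there exists ψ ∈ H, ψ ≠ 0, with ⟨Ω, ψ⟩ = 0 and U(n, ‖n‖₁/v)ψ = e^{i(k·n − f‖n‖₁/v)}·ψ } is countable, and in particular has Lebesgue measure zero (here k·n = Σᵢ kᵢnᵢ). -/

import Mathlib

open Filter MeasureTheory Topology

noncomputable def l1 {D : ℕ} (n : Fin D → ℤ) : ℝ := ∑ i, |(n i : ℝ)|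

variable {D : ℕ} {H : Type*} [NormedAddCommGroup H] [InnerProductSpace ℂ H]
  [CompleteSpace H] [TopologicalSpace.SeparableSpace H]

lemma l1_zsmul (c : ℤ) (n : Fin D → ℤ) : l1 (c • n) = |(c : ℝ)| * l1 n := by
  unfold l1
  rw [Finset.mul_sum]
  refine Finset.sum_congr rfl fun i _ => ?_
  have : (c • n) i = c * n i := rfl
  rw [this]
  push_cast
  rw [abs_mul]

lemma l1_pos {n : Fin D → ℤ} (hn : n ≠ 0) : 0 < l1 n := by
  obtain ⟨i, hi⟩ : ∃ i, n i ≠ 0 := by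
    by_contra h
    push_neg at h
    exact hn (funext h)
  refine Finset.sum_pos' (fun j _ => abs_nonneg _) ⟨i, Finset.mem_univ i, ?_⟩
  simpa using hi

lemma zsmul_ne_zero {c : ℤ} {n : Fin D → ℤ} (hc : c ≠ 0) (hn : n ≠ 0) : c • n ≠ 0 := by
  obtain ⟨i, hi⟩ : ∃ i, n i ≠ 0 := by
    by_contra h; push_neg at h; exact hn (funext h)
  intro h
  have : (c • n) i = 0 := by rw [h]; rfl
  exact hi (by simpa [mul_eq_zero, hc] using this)

noncomputable def eigSub (T : H ≃ₗᵢ[ℂ] H) (c : ℂ) : Submodule ℂ H where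
  carrier := {x | T x = c • x}
  add_mem' := fun {x y} hx hy => by
    simp only [Set.mem_setOf_eq] at *
    rw [map_add, hx, hy, smul_add]
  zero_mem' := by simp
  smul_mem' := fun r x hx => by
    simp only [Set.mem_setOf_eq] at *
    rw [_root_.map_smul, hx, smul_comm]

lemma eigSub_closed (T : H ≃ₗᵢ[ℂ] H) (c : ℂ) : IsClosed ((eigSub T c : Set H)) :=
  isClosed_eq T.continuous (continuous_id.const_smul c)

lemma mem_eigSub_iff {T : H ≃ₗᵢ[ℂ] H} {c : ℂ} {x : H} : x ∈ eigSub T c ↔ T x = c • x :=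
  Iff.rfl

lemma U_zsmul_eig (U : (Fin D → ℤ) × ℝ → H ≃ₗᵢ[ℂ] H)
    (hU0 : U 0 = LinearIsometryEquiv.refl ℂ H)
    (hUadd : ∀ p q : (Fin D → ℤ) × ℝ, U (p + q) = (U q).trans (U p))
    (p : (Fin D → ℤ) × ℝ) (ψ : H) (c : ℂ) (hc : c ≠ 0)
    (h : U p ψ = c • ψ) : ∀ m : ℤ, U (m • p) ψ = (c ^ m) • ψ := by
  intro m
  induction m using Int.induction_on with
  | zero => simp [hU0]
  | succ i ih =>
    have hstep : ((i : ℤ) + 1) • p = (i : ℤ) • p + p := by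
      rw [add_smul, one_smul]
    rw [hstep, hUadd, LinearIsometryEquiv.trans_apply, h, _root_.map_smul, ih, smul_smul,
      zpow_add_one₀ hc]
    ring_nf
  | pred i ih =>
    have hstep : (-(i : ℤ)) • p = (-(i : ℤ) - 1) • p + p := by
      rw [sub_smul, one_smul, sub_add_cancel]
    rw [hstep, hUadd, LinearIsometryEquiv.trans_apply, h, _root_.map_smul] at ih
    have : U ((-(i : ℤ) - 1) • p) ψ = c⁻¹ • (c ^ (-(i:ℤ)) • ψ) := by
      rw [eq_inv_smul_iff₀ hc]; exact ih
    rw [this, smul_smul, ← zpow_neg_one, ← zpow_add₀ hc]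
    congr 1
    ring_nf

lemma choose_ab (vc L v v' : ℝ) (hvc : 0 < vc) (hL : 0 < L) (hv : v ≠ 0) (hv' : v' ≠ 0)
    (hne : v ≠ v') :
    ∃ a b : ℤ, a ≠ b ∧ vc * |(a : ℝ) * (L / v) - (b : ℝ) * (L / v')| < |(a : ℝ) - (b : ℝ)| * L := by
  set r : ℝ := v / v' with hr
  have hr1 : r ≠ 1 := by
    intro h
    exact hne ((div_eq_one_iff_eq hv').mp h)
  have hrpos : 0 < |r - 1| := abs_pos.mpr (sub_ne_zero.mpr hr1)
  obtain ⟨N, hN⟩ := exists_nat_gt ((vc / |v| + 1) / |r - 1|)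
  have hvpos : 0 < |v| := abs_pos.mpr hv
  set a : ℤ := ⌊(N : ℝ) * r⌋ with ha
  have hfl1 : (a : ℝ) ≤ (N : ℝ) * r := Int.floor_le _
  have hfl2 : (N : ℝ) * r - 1 < (a : ℝ) := Int.sub_one_lt_floor _
  have habs1 : |(a : ℝ) - (N : ℝ) * r| ≤ 1 := by
    rw [abs_le]; constructor <;> linarith
  have hNr : vc / |v| + 1 < (N : ℝ) * |r - 1| := by
    rw [div_lt_iff₀ hrpos] at hN
    linarith
  have hNrN : |(N : ℝ) * r - (N : ℝ)| = (N : ℝ) * |r - 1| := by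
    have h : (N : ℝ) * r - (N : ℝ) = (N : ℝ) * (r - 1) := by ring
    rw [h, abs_mul, Nat.abs_cast]
  have htri : |(N : ℝ) * r - (N : ℝ)| ≤ |(N : ℝ) * r - (a : ℝ)| + |(a : ℝ) - (N : ℝ)| :=
    abs_sub_le _ _ _
  have habs1' : |(N : ℝ) * r - (a : ℝ)| ≤ 1 := by rw [abs_sub_comm]; exact habs1
  have hkey : vc / |v| < |(a : ℝ) - (N : ℝ)| := by
    have : (N : ℝ) * |r - 1| - 1 ≤ |(a : ℝ) - (N : ℝ)| := by linarith [htri, hNrN.symm.le]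
    linarith
  refine ⟨a, (N : ℤ), ?_, ?_⟩
  · intro h
    rw [h] at hkey
    simp only [Int.cast_natCast, sub_self, abs_zero] at hkey
    have := div_pos hvc hvpos
    linarith
  · push_cast
    have heq : (a : ℝ) * (L / v) - (N : ℝ) * (L / v') = L * (((a : ℝ) - (N : ℝ) * r) / v) := by
      rw [hr]
      field_simp
    rw [heq, abs_mul, abs_of_pos hL, abs_div]
    have h1 : |(a : ℝ) - (N : ℝ) * r| / |v| ≤ 1 / |v| :=
      (div_le_div_iff_of_pos_right hvpos).mpr habs1
    calc vc * (L * (|(a : ℝ) - (N : ℝ) * r| / |v|)) ≤ vc * (L * (1 / |v|)) := by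
          gcongr
      _ = L * (vc / |v|) := by ring
      _ < L * |(a : ℝ) - (N : ℝ)| := (mul_lt_mul_iff_right₀ hL).mpr hkey
      _ = |(a : ℝ) - (N : ℝ)| * L := mul_comm _ _

lemma eig_inner_eq_zero
    (U : (Fin D → ℤ) × ℝ → H ≃ₗᵢ[ℂ] H)
    (hU0 : U 0 = LinearIsometryEquiv.refl ℂ H)
    (hUadd : ∀ p q : (Fin D → ℤ) × ℝ, U (p + q) = (U q).trans (U p))
    (Ω : H) (hΩ : ‖Ω‖ = 1) (hΩinv : ∀ p, U p Ω = Ω)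
    (vc : ℝ)
    (hSL : ∀ (m : Fin D → ℤ) (t : ℝ), m ≠ 0 → vc * |t| < l1 m →
      ∀ ψ : H, U (m, t) ψ = ψ → ∃ c : ℂ, ψ = c • Ω)
    (hSLO : ∀ (m : Fin D → ℤ) (t : ℝ), m ≠ 0 → vc * |t| < l1 m →
      ∀ θ : ℝ, (∀ j : ℤ, θ ≠ 2 * Real.pi * j) →
      ∀ ψ : H, U (m, t) ψ = Complex.exp (Complex.I * (θ : ℂ)) • ψ → ψ = 0)
    (n : Fin D → ℤ) (hn : n ≠ 0)
    (t t' θ θ' : ℝ) (ψ ψ' : H)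
    (hψ : U (n, t) ψ = Complex.exp (Complex.I * (θ : ℂ)) • ψ)
    (hψ' : U (n, t') ψ' = Complex.exp (Complex.I * (θ' : ℂ)) • ψ')
    (hor : (inner ℂ Ω ψ' : ℂ) = 0)
    (a b : ℤ) (hab : a ≠ b)
    (hsl : vc * |(a : ℝ) * t - (b : ℝ) * t'| < |(a : ℝ) - (b : ℝ)| * l1 n) :
    (inner ℂ ψ ψ' : ℂ) = 0 := by
  classical
  set lam : ℂ := Complex.exp (Complex.I * (θ : ℂ)) with hlam
  set lam' : ℂ := Complex.exp (Complex.I * (θ' : ℂ)) with hlam'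
  have hlamne : lam ≠ 0 := Complex.exp_ne_zero _
  have hlam'ne : lam' ≠ 0 := Complex.exp_ne_zero _
  have hcomm : ∀ p q (x : H), U p (U q x) = U q (U p x) := by
    intro p q x
    have h1 := hUadd p q
    have h2 := hUadd q p
    rw [add_comm] at h2
    have h3 := h1.symm.trans h2
    calc U p (U q x) = ((U q).trans (U p)) x := rfl
      _ = ((U p).trans (U q)) x := by rw [← h3]
      _ = U q (U p x) := rfl
  have hinvr : ∀ p (x : H), U p (U (-p) x) = x := by
    intro p x
    have h1 : ((U (-p)).trans (U p)) x = U 0 x := by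
      rw [← hUadd, add_neg_cancel]
    simpa [hU0] using h1
  set K : Submodule ℂ H := eigSub (U (n, t)) lam with hK
  haveI : CompleteSpace K := (eigSub_closed (U (n, t)) lam).completeSpace_coe
  set P := K.orthogonalProjectionOnto with hPdef
  set φ : H := (P ψ' : H) with hφ
  have hψK : ψ ∈ K := mem_eigSub_iff.mpr hψ
  have hφK : φ ∈ K := (P ψ').2
  have hAφ : U (n, t) φ = lam • φ := hφK
  have hBmem : ∀ x : H, x ∈ K → U (n, t') x ∈ K := fun x hx => by
    have hx' : U (n, t) x = lam • x := hx
    show U (n, t) (U (n, t') x) = lam • U (n, t') x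
    rw [hcomm, hx', _root_.map_smul]
  have hBinvmem : ∀ x : H, x ∈ K → U (-(n, t')) x ∈ K := fun x hx => by
    have hx' : U (n, t) x = lam • x := hx
    show U (n, t) (U (-(n, t')) x) = lam • U (-(n, t')) x
    rw [hcomm, hx', _root_.map_smul]
  have hPB : (P (U (n, t') ψ') : H) = U (n, t') φ := by
    apply Submodule.eq_starProjection_of_mem_of_inner_eq_zero
    · exact hBmem φ hφK
    · intro w hw
      have h1 : U (n, t') ψ' - U (n, t') φ = U (n, t') (ψ' - φ) := (map_sub _ _ _).symm
      have h2 : w = U (n, t') (U (-(n, t')) w) := (hinvr _ w).symm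
      rw [h1, h2, LinearIsometryEquiv.inner_map_map]
      exact K.starProjection_inner_eq_zero ψ' _ (hBinvmem w hw)
  have hBφ : U (n, t') φ = lam' • φ := by
    have hs : P (lam' • ψ') = lam' • P ψ' := _root_.map_smul P lam' ψ'
    rw [← hPB, hψ', hs, Submodule.coe_smul]
  have hΩφ : (inner ℂ Ω φ : ℂ) = 0 := by
    have hAdj : (inner ℂ Ω φ : ℂ) = inner ℂ ((P Ω : H)) ψ' := by
      exact (K.inner_starProjection_left_eq_right Ω ψ').symm
    by_cases hl1 : lam = 1
    · have hΩK : Ω ∈ K := by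
        show U (n, t) Ω = lam • Ω
        rw [hΩinv, hl1, one_smul]
      have hPΩ : (P Ω : H) = Ω := K.starProjection_eq_self_iff.mpr hΩK
      rw [hAdj, hPΩ, hor]
    · have hΩperp : Ω ∈ Kᗮ := by
        rw [Submodule.mem_orthogonal']
        intro u hu
        have hu' : U (n, t) u = lam • u := hu
        have h1 : (inner ℂ Ω u : ℂ) = lam * inner ℂ Ω u := by
          calc (inner ℂ Ω u : ℂ) = inner ℂ (U (n, t) Ω) (U (n, t) u) :=
                (LinearIsometryEquiv.inner_map_map _ _ _).symm
            _ = inner ℂ Ω (lam • u) := by rw [hΩinv, hu']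
            _ = lam * inner ℂ Ω u := inner_smul_right _ _ _
        have h2 : (lam - 1) * (inner ℂ Ω u : ℂ) = 0 := by linear_combination -h1
        rcases mul_eq_zero.mp h2 with h | h
        · exact absurd (sub_eq_zero.mp h) hl1
        · exact h
      have hPΩ : P Ω = 0 :=
        Submodule.orthogonalProjectionOnto_apply_of_mem_orthogonal hΩperp
      rw [hAdj, hPΩ, Submodule.coe_zero, inner_zero_left]
  set θ'' : ℝ := (a : ℝ) * θ - (b : ℝ) * θ' with hθ''
  set m : Fin D → ℤ := (a - b) • n with hm
  have hmne : m ≠ 0 := zsmul_ne_zero (sub_ne_zero.mpr hab) hn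
  have hl1m : l1 m = |(a : ℝ) - (b : ℝ)| * l1 n := by
    rw [hm, l1_zsmul]
    push_cast
    ring_nf
  have hslm : vc * |(a : ℝ) * t - (b : ℝ) * t'| < l1 m := by rw [hl1m]; exact hsl
  have heig : U (m, (a : ℝ) * t - (b : ℝ) * t') φ
      = Complex.exp (Complex.I * (θ'' : ℂ)) • φ := by
    have h1 := U_zsmul_eig U hU0 hUadd (n, t) φ lam hlamne hAφ a
    have h2 := U_zsmul_eig U hU0 hUadd (n, t') φ lam' hlam'ne hBφ (-b)
    have hsum : a • ((n, t) : (Fin D → ℤ) × ℝ) + (-b) • ((n, t') : (Fin D → ℤ) × ℝ)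
        = ((m, (a : ℝ) * t - (b : ℝ) * t') : (Fin D → ℤ) × ℝ) := by
      have hfst : a • n + (-b) • n = m := by
        rw [hm, sub_smul, sub_eq_add_neg, neg_smul]
      have hsnd : a • t + (-b) • t' = (a : ℝ) * t - (b : ℝ) * t' := by
        rw [zsmul_eq_mul, zsmul_eq_mul]
        push_cast
        ring
      show (a • n + (-b) • n, a • t + (-b) • t')
          = ((m, (a : ℝ) * t - (b : ℝ) * t') : (Fin D → ℤ) × ℝ)
      rw [hfst, hsnd]
    calc U (m, (a : ℝ) * t - (b : ℝ) * t') φ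
        = U (a • ((n, t) : (Fin D → ℤ) × ℝ) + (-b) • ((n, t') : (Fin D → ℤ) × ℝ)) φ := by
          rw [hsum]
      _ = U (a • ((n, t) : (Fin D → ℤ) × ℝ)) (U ((-b) • ((n, t') : (Fin D → ℤ) × ℝ)) φ) := by
          rw [hUadd]; rfl
      _ = lam' ^ (-b) • (lam ^ a • φ) := by rw [h2, _root_.map_smul, h1]
      _ = Complex.exp (Complex.I * (θ'' : ℂ)) • φ := by
          have harg : ((-b : ℤ) : ℂ) * (Complex.I * (θ' : ℂ)) + ((a : ℤ) : ℂ) * (Complex.I * (θ : ℂ))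
              = Complex.I * ((θ'' : ℝ) : ℂ) := by
            rw [hθ'']
            push_cast
            ring
          rw [smul_smul, hlam, hlam', ← Complex.exp_int_mul, ← Complex.exp_int_mul,
            ← Complex.exp_add, harg]
  have hφ0 : φ = 0 := by
    by_cases hj : ∃ j : ℤ, θ'' = 2 * Real.pi * j
    · obtain ⟨j, hjj⟩ := hj
      have hone : Complex.exp (Complex.I * (θ'' : ℂ)) = 1 := by
        rw [hjj]
        have hc : Complex.I * ((2 * Real.pi * (j : ℝ) : ℝ) : ℂ)
            = (j : ℂ) * (2 * (Real.pi : ℂ) * Complex.I) := by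
          push_cast
          ring
        rw [hc, Complex.exp_int_mul_two_pi_mul_I]
      rw [hone, one_smul] at heig
      obtain ⟨c, hc⟩ := hSL m _ hmne hslm φ heig
      have hcc : (inner ℂ Ω φ : ℂ) = c := by
        rw [hc, inner_smul_right, inner_self_eq_norm_sq_to_K, hΩ]
        norm_num
      rw [hΩφ] at hcc
      rw [hc, ← hcc, zero_smul]
    · push_neg at hj
      exact hSLO m _ hmne hslm θ'' hj φ heig
  have hPψ : (P ψ : H) = ψ := K.starProjection_eq_self_iff.mpr hψK
  calc (inner ℂ ψ ψ' : ℂ) = inner ℂ ((P ψ : H)) ψ' := by rw [hPψ]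
    _ = inner ℂ ψ ((P ψ' : H)) := K.inner_starProjection_left_eq_right ψ ψ'
    _ = 0 := by rw [← hφ, hφ0, inner_zero_right]

/-- **Oscillatory projection theorem** (Theorem 3.9, Hilbert-space form): under Hypotheses
(SL) and (SLO), for each `(k, f)` and each `n ≠ 0` the set of speeds admitting a nonzero
phase-twisted invariant vector orthogonal to `Ω` is countable, hence Lebesgue-null. -/
theorem oscillatory_projection_theorem
    (U : (Fin D → ℤ) × ℝ → H ≃ₗᵢ[ℂ] H)
    (hU0 : U 0 = LinearIsometryEquiv.refl ℂ H)
    (hUadd : ∀ p q : (Fin D → ℤ) × ℝ, U (p + q) = (U q).trans (U p))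
    (Ω : H) (hΩ : ‖Ω‖ = 1) (hΩinv : ∀ p, U p Ω = Ω)
    (vc : ℝ) (hvc : 0 < vc)
    (hSL : ∀ (m : Fin D → ℤ) (t : ℝ), m ≠ 0 → vc * |t| < l1 m →
      ∀ ψ : H, U (m, t) ψ = ψ → ∃ c : ℂ, ψ = c • Ω)
    (hSLO : ∀ (m : Fin D → ℤ) (t : ℝ), m ≠ 0 → vc * |t| < l1 m →
      ∀ θ : ℝ, (∀ j : ℤ, θ ≠ 2 * Real.pi * j) →
      ∀ ψ : H, U (m, t) ψ = Complex.exp (Complex.I * (θ : ℂ)) • ψ → ψ = 0)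
    (k : Fin D → ℝ) (f : ℝ) (n : Fin D → ℤ) (hn : n ≠ 0) :
    Set.Countable
      {v : ℝ | v ≠ 0 ∧ ∃ ψ : H, ψ ≠ 0 ∧ (inner ℂ Ω ψ : ℂ) = 0 ∧
        U (n, l1 n / v) ψ =
          Complex.exp (Complex.I * ((((∑ i, k i * (n i : ℝ)) - f * l1 n / v) : ℝ) : ℂ)) • ψ} ∧
    volume
      {v : ℝ | v ≠ 0 ∧ ∃ ψ : H, ψ ≠ 0 ∧ (inner ℂ Ω ψ : ℂ) = 0 ∧
        U (n, l1 n / v) ψ =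
          Complex.exp (Complex.I * ((((∑ i, k i * (n i : ℝ)) - f * l1 n / v) : ℝ) : ℂ)) • ψ} = 0 := by
  classical
  have hcount : Set.Countable
      {v : ℝ | v ≠ 0 ∧ ∃ ψ : H, ψ ≠ 0 ∧ (inner ℂ Ω ψ : ℂ) = 0 ∧
        U (n, l1 n / v) ψ =
          Complex.exp (Complex.I * ((((∑ i, k i * (n i : ℝ)) - f * l1 n / v) : ℝ) : ℂ)) • ψ} := by
    set S : Set ℝ := {v : ℝ | v ≠ 0 ∧ ∃ ψ : H, ψ ≠ 0 ∧ (inner ℂ Ω ψ : ℂ) = 0 ∧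
        U (n, l1 n / v) ψ =
          Complex.exp (Complex.I * ((((∑ i, k i * (n i : ℝ)) - f * l1 n / v) : ℝ) : ℂ)) • ψ}
      with hSdef
    have hLpos : 0 < l1 n := l1_pos hn
    have hmem : ∀ v ∈ S, ∃ ψ : H, ψ ≠ 0 ∧ (inner ℂ Ω ψ : ℂ) = 0 ∧
        U (n, l1 n / v) ψ =
          Complex.exp (Complex.I * ((((∑ i, k i * (n i : ℝ)) - f * l1 n / v) : ℝ) : ℂ)) • ψ :=
      fun v hv => hv.2
    choose! Ψ hΨne hΨor hΨeig using hmem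
    set e : ℝ → H := fun v => (‖Ψ v‖ : ℂ)⁻¹ • Ψ v with he
    have hnorm : ∀ v ∈ S, ‖e v‖ = 1 := fun v hv => norm_smul_inv_norm (hΨne v hv)
    have hperp : ∀ v ∈ S, ∀ w ∈ S, v ≠ w → (inner ℂ (e v) (e w) : ℂ) = 0 := by
      intro v hv w hw hvw
      have hbase : (inner ℂ (Ψ v) (Ψ w) : ℂ) = 0 := by
        obtain ⟨a, b, hab, hsl⟩ := choose_ab vc (l1 n) v w hvc hLpos hv.1 hw.1 hvw
        have heig1 := hΨeig v hv
        have heig2 := hΨeig w hw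
        have ht1 : f * l1 n / v = f * (l1 n / v) := by ring
        have ht2 : f * l1 n / w = f * (l1 n / w) := by ring
        exact eig_inner_eq_zero U hU0 hUadd Ω hΩ hΩinv vc hSL hSLO n hn
          (l1 n / v) (l1 n / w)
          ((∑ i, k i * (n i : ℝ)) - f * l1 n / v)
          ((∑ i, k i * (n i : ℝ)) - f * l1 n / w)
          (Ψ v) (Ψ w) heig1 heig2 (hΨor w hw) a b hab hsl
      simp only [he, inner_smul_left, inner_smul_right, hbase, mul_zero]
    have hdist : ∀ v ∈ S, ∀ w ∈ S, v ≠ w → 1 ≤ dist (e v) (e w) := by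
      intro v hv w hw hvw
      have h2 : ‖e v - e w‖ ^ 2 = 2 := by
        rw [@norm_sub_sq ℂ, hperp v hv w hw hvw, hnorm v hv, hnorm w hw]
        norm_num
      have h3 : dist (e v) (e w) = ‖e v - e w‖ := dist_eq_norm _ _
      nlinarith [dist_nonneg (x := e v) (y := e w)]
    have hdisj : S.PairwiseDisjoint (fun v => Metric.ball (e v) (1 / 2)) := by
      intro v hv w hw hvw
      exact Metric.ball_disjoint_ball (by linarith [hdist v hv w hw hvw])
    exact hdisj.countable_of_isOpen (fun v _ => Metric.isOpen_ball)
      (fun v _ => ⟨e v, Metric.mem_ball_self (by norm_num)⟩)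
  exact ⟨hcount, hcount.measure_zero _⟩
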